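/- arXiv:2505.09640 — 8 statements merged into one kernel-verified Lean document; each statement's English description precedes it below -/
import Mathlib

section
/- Let M be a k-class model over a finite feature set X, let e be an entity, and let x ∈ X. Then x is necessary for the prediction M(e) (i.e., x belongs to every sufficient reason for M(e)) if and only if there exists a value b ∈ D_x such that M(e) ≠ M(e_{x=b}). -/
/-- `S` is a reason for the prediction `M e`: every entity agreeing with `e` on `S`
gets the same prediction. -/
def IsReason {X : Type*} {D : X → Type*} {C : Type*}
    (M : (∀ x, D x) → C) (e : ∀ x, D x) (S : Set X) : Prop :=
  ∀ e' : ∀ x, D x, (∀ x ∈ S, e' x = e x) → M e' = M e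

/-- `S` is a sufficient reason: a reason that is minimal with respect to being a reason. -/
def IsSufficientReason {X : Type*} {D : X → Type*} {C : Type*}
    (M : (∀ x, D x) → C) (e : ∀ x, D x) (S : Set X) : Prop :=
  IsReason M e S ∧ ∀ S' ⊂ S, ¬ IsReason M e S'

/-- Feature `x` is necessary for the prediction `M e`: it belongs to every sufficient reason. -/
def IsNecessary {X : Type*} {D : X → Type*} {C : Type*}
    (M : (∀ x, D x) → C) (e : ∀ x, D x) (x : X) : Prop :=
  ∀ S : Set X, IsSufficientReason M e S → x ∈ S

/-- Characterization of necessary features: `x` is necessary for `M e` iff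
flipping `x` to some value `b` changes the prediction. -/
theorem necessary_iff_exists_flip
    {X : Type*} [Finite X] [DecidableEq X] {D : X → Type*} [∀ x, Nonempty (D x)]
    {C : Type*} [Finite C]
    (M : (∀ x, D x) → C) (e : ∀ x, D x) (x : X) :
    IsNecessary M e x ↔ ∃ b : D x, M e ≠ M (Function.update e x b) := by
  constructor
  · intro hnec
    by_contra h
    push_neg at h
    -- every flip keeps the prediction
    have hreason : IsReason M e {x}ᶜ := by
      intro e' he'
      have he : e' = Function.update e x (e' x) := by
        funext y
        by_cases hy : y = x
        · subst hy; simp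
        · rw [Function.update_of_ne hy]
          exact he' y hy
      rw [he, ← h (e' x)]
    -- take a minimal reason contained in {x}ᶜ
    have hwf : WellFounded ((· < ·) : Set X → Set X → Prop) := wellFounded_lt
    obtain ⟨S, ⟨hSr, hSsub⟩, hmin⟩ :=
      hwf.has_min {S | IsReason M e S ∧ S ⊆ {x}ᶜ} ⟨{x}ᶜ, hreason, le_refl _⟩
    have hsuf : IsSufficientReason M e S := by
      refine ⟨hSr, fun S' hS' hS'r => ?_⟩
      exact hmin S' ⟨hS'r, hS'.subset.trans hSsub⟩ hS'
    exact hSsub (hnec S hsuf) rfl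
  · rintro ⟨b, hb⟩ S ⟨hS, -⟩
    by_contra hx
    refine hb (hS (Function.update e x b) fun y hy => ?_).symm
    exact Function.update_of_ne (by rintro rfl; exact hx hy) _ _
end

section
/- Let M be a k-class model over a finite feature set X, let e be an entity, and let x ∈ X. Then x belongs to every sufficient reason for M(e) if and only if X \ {x} is not a reason for M(e). -/
/-- `x` belongs to every sufficient reason for `M e` iff `X \ {x}` is not a reason
for `M e`. -/
theorem mem_all_sufficientReasons_iff_compl_not_reason
    {X : Type*} [Finite X] {D : X → Type*} [∀ x, Nonempty (D x)]
    {C : Type*} [Finite C]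
    (M : (∀ x, D x) → C) (e : ∀ x, D x) (x : X) :
    (∀ S : Set X, IsSufficientReason M e S → x ∈ S) ↔
      ¬ IsReason M e (Set.univ \ {x}) := by
  have mono : ∀ S T : Set X, S ⊆ T → IsReason M e S → IsReason M e T := by
    intro S T hST hS e' h
    exact hS e' fun y hy => h y (hST hy)
  constructor
  · intro hall hR
    -- find a minimal reason inside univ \ {x}
    have : Finite (Set X) := inferInstance
    obtain ⟨S, hS, hmin⟩ := Set.Finite.exists_minimalFor id
      {S : Set X | IsReason M e S ∧ S ⊆ Set.univ \ {x}} (Set.toFinite _)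
      ⟨_, hR, subset_rfl⟩
    have hsuff : IsSufficientReason M e S := by
      refine ⟨hS.1, fun S' hS' hS'R => ?_⟩
      have := @hmin S' ⟨hS'R, hS'.subset.trans hS.2⟩ hS'.subset
      exact hS'.ne (hS'.subset.antisymm this)
    exact (hS.2 (hall S hsuff)).2 rfl
  · intro hnot S hS
    by_contra hx
    exact hnot (mono S _ (fun y hy => ⟨trivial, fun h => hx (h ▸ hy)⟩) hS.1)
end

section
/- Let M be a k-class model over a finite feature set X and let x ∈ X. The following are equivalent: (i) x is useful for M, i.e., there exist an entity e and b ∈ D_x with M(e) ≠ M(e_{x=b}); (ii) there exists an entity e such that x is necessary for M(e), i.e., x belongs to every sufficient reason for M(e); (iii) there exists an entity e such that x is relevant for M(e), i.e., x belongs to some sufficient reason for M(e). -/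
/-- Feature `x` is relevant for the prediction `M e`: it belongs to some sufficient reason. -/
def IsRelevant {X : Type*} {D : X → Type*} {C : Type*}
    (M : (∀ x, D x) → C) (e : ∀ x, D x) (x : X) : Prop :=
  ∃ S : Set X, IsSufficientReason M e S ∧ x ∈ S

/-- Feature `x` is useful for the model `M`: there is an entity whose prediction changes
when the value of `x` is changed to some `b`. -/
def IsUseful {X : Type*} [DecidableEq X] {D : X → Type*} {C : Type*}
    (M : (∀ x, D x) → C) (x : X) : Prop :=
  ∃ (e : ∀ y, D y) (b : D x), M e ≠ M (Function.update e x b)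

/-- Characterization of useful features: `x` is useful for `M` iff it is necessary for
some prediction, iff it is relevant for some prediction. -/
theorem useful_iff_exists_necessary_iff_exists_relevant
    {X : Type*} [Finite X] [DecidableEq X] {D : X → Type*} [∀ x, Nonempty (D x)]
    {C : Type*} [Finite C]
    (M : (∀ x, D x) → C) (x : X) :
    (IsUseful M x ↔ ∃ e : ∀ y, D y, IsNecessary M e x) ∧
      (IsUseful M x ↔ ∃ e : ∀ y, D y, IsRelevant M e x) := by
  -- minimal reasons exist inside any reason
  have hmin : ∀ (e : ∀ y, D y) (S : Set X), IsReason M e S →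
      ∃ T ⊆ S, IsSufficientReason M e T := by
    intro e
    have key : ∀ n (S : Set X), S.ncard = n → IsReason M e S →
        ∃ T ⊆ S, IsSufficientReason M e T := by
      intro n
      induction n using Nat.strong_induction_on with
      | _ n ih =>
        intro S hn hS
        by_cases h : ∀ S' ⊂ S, ¬ IsReason M e S'
        · exact ⟨S, subset_rfl, hS, h⟩
        · push_neg at h
          obtain ⟨S', hsub, hS'⟩ := h
          obtain ⟨T, hT, hsuf⟩ := ih S'.ncard
            (by rw [← hn]; exact Set.ncard_lt_ncard hsub S.toFinite) S' rfl hS'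
          exact ⟨T, hT.trans hsub.subset, hsuf⟩
    intro S hS
    exact key S.ncard S rfl hS
  have h1 : IsUseful M x → ∃ e : ∀ y, D y, IsNecessary M e x := by
    rintro ⟨e, b, hb⟩
    refine ⟨e, fun S hS => ?_⟩
    by_contra hx
    exact hb (hS.1 (Function.update e x b) (fun y hy =>
      Function.update_of_ne (by rintro rfl; exact hx hy) _ _)).symm
  have h2 : (∃ e : ∀ y, D y, IsNecessary M e x) → ∃ e : ∀ y, D y, IsRelevant M e x := by
    rintro ⟨e, hnec⟩
    have huniv : IsReason M e Set.univ := by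
      intro e' he'
      have : e' = e := funext fun y => he' y (Set.mem_univ y)
      rw [this]
    obtain ⟨T, _, hT⟩ := hmin e Set.univ huniv
    exact ⟨e, T, hT, hnec T hT⟩
  have h3 : (∃ e : ∀ y, D y, IsRelevant M e x) → IsUseful M x := by
    rintro ⟨e, S, ⟨hS, hminS⟩, hxS⟩
    have hne : ¬ IsReason M e (S \ {x}) :=
      hminS _ (Set.sdiff_singleton_ssubset.mpr hxS)
    rw [IsReason] at hne
    push_neg at hne
    obtain ⟨e', he', hMe'⟩ := hne
    refine ⟨Function.update e' x (e x), e' x, ?_⟩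
    have h1' : M (Function.update e' x (e x)) = M e := by
      apply hS
      intro y hy
      by_cases hyx : y = x
      · subst hyx; simp
      · rw [Function.update_of_ne hyx]
        exact he' y ⟨hy, hyx⟩
    have h2' : Function.update (Function.update e' x (e x)) x (e' x) = e' := by
      funext y
      by_cases hyx : y = x
      · subst hyx; simp
      · simp [Function.update_of_ne hyx]
    rw [h1', h2']
    exact fun h => hMe' h.symm
  exact ⟨⟨h1, fun h => h3 (h2 h)⟩, ⟨fun h => h2 (h1 h), h3⟩⟩
end

section
/- Let M be a k-class model (with classes {0,…,k−1}) over a finite feature set X all of whose domains D_y are finite, and let x ∈ X. Then the number of entities e for which x is NOT necessary for the prediction M(e) equals the sum over classes c ∈ {0,…,k−1} of the number of entities e such that M(e_{x=b}) = c for every b ∈ D_x. -/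
lemma not_nec_iff {X : Type*} [Fintype X] [DecidableEq X]
    {D : X → Type*} {k : ℕ} (M : (∀ x, D x) → Fin k) (x : X) (e : ∀ y, D y) :
    ¬ IsNecessary M e x ↔ ∀ b, M (Function.update e x b) = M e := by
  constructor
  · intro h b
    rw [IsNecessary] at h
    push_neg at h
    obtain ⟨S, hS, hx⟩ := h
    apply hS.1
    intro y hy
    exact Function.update_of_ne (fun hyx => hx (by rwa [hyx] at hy)) _ _
  · intro h hnec
    have hreason : IsReason M e ({x}ᶜ) := by
      intro e' he'
      have : e' = Function.update e x (e' x) := by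
        funext y
        by_cases hy : y = x
        · subst hy; simp
        · rw [Function.update_of_ne hy]; exact he' y hy
      rw [this, h]
    set s : Set (Set X) := {S | IsReason M e S ∧ S ⊆ {x}ᶜ} with hs
    obtain ⟨S, hSs, hmin⟩ := (wellFounded_lt (α := Set X)).has_min s ⟨{x}ᶜ, hreason, le_refl _⟩
    have hsuff : IsSufficientReason M e S := by
      refine ⟨hSs.1, fun S' hS' hR => ?_⟩
      exact hmin S' ⟨hR, hS'.le.trans hSs.2⟩ hS'
    exact hSs.2 (hnec S hsuff) rfl

/-- The number of entities for which `x` is not necessary equals the sum over the classes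
`c ∈ {0, …, k-1}` of the number of entities `e` such that `M (e_{x = b}) = c` for every
`b ∈ D x`. -/
theorem card_not_necessary_eq_sum_card_constant_on_fiber
    {X : Type*} [Fintype X] [DecidableEq X]
    {D : X → Type*} [∀ x, Fintype (D x)] [∀ x, Nonempty (D x)]
    {k : ℕ} (M : (∀ x, D x) → Fin k) (x : X) :
    Nat.card {e : ∀ y, D y // ¬ IsNecessary M e x} =
      ∑ c : Fin k,
        Nat.card {e : ∀ y, D y // ∀ b : D x, M (Function.update e x b) = c} := by
  classical
  simp only [Nat.card_eq_fintype_card]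
  rw [← Fintype.card_sigma]
  apply Fintype.card_congr
  refine
    { toFun := fun e => ⟨M e.1, e.1, fun b => ((not_nec_iff M x e.1).1 e.2 b)⟩
      invFun := fun p => ⟨p.2.1, (not_nec_iff M x p.2.1).2 fun b => ?_⟩
      left_inv := fun e => rfl
      right_inv := fun p => ?_ }
  · have hc : M p.2.1 = p.1 := by
      have := p.2.2 (p.2.1 x)
      rwa [Function.update_eq_self] at this
    rw [p.2.2 b, hc]
  · obtain ⟨c, e, he⟩ := p
    have hc : M e = c := by have := he (e x); rwa [Function.update_eq_self] at this
    subst hc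
    rfl
end

section
/- Let M be a Boolean model over a finite feature set X given in conjunctive normal form: there are a finite index set I and, for each i ∈ I, a finite set L_i of literals, where a literal ℓ consists of a feature feat(ℓ) ∈ X together with a subset pred(ℓ) ⊆ D_{feat(ℓ)}, and ℓ is satisfied by an entity e' iff e'(feat(ℓ)) ∈ pred(ℓ); M(e') = 1 iff for every i ∈ I some literal of L_i is satisfied by e'. Assume no clause is tautologically true, i.e., for every i ∈ I there exists an entity satisfying no literal of L_i. Let e be an entity with M(e) = 1, and define the hypergraph H on node set X whose hyperedges are the sets B_i = { feat(ℓ) : ℓ ∈ L_i and ℓ is satisfied by e }, for i ∈ I. Then a set S ⊆ X is a sufficient reason for M(e) if and only if S is a minimal hitting set of H. -/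
/-- Sufficient reasons as minimal hitting sets.  A Boolean model `M` over features `X`
is given in CNF by a finite index set `I` of clauses, the clause `i` being the finite set
`L i` of literals, where a literal is a pair `⟨x, P⟩` of a feature `x` and a set
`P ⊆ D x` of values, satisfied by `e'` iff `e' x ∈ P`; `M e' = 1` iff each clause has a
literal satisfied by `e'`.  Assuming no clause is tautologically true and `M e = 1`,
a set `S ⊆ X` is a sufficient reason for `M e` iff `S` is a minimal hitting set of the
hypergraph on `X` whose hyperedges are the sets
`B i = {feat ℓ : ℓ ∈ L i satisfied by e}`. -/
theorem sufficientReason_iff_minimal_hittingSet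
    {X : Type*} [Finite X] {D : X → Type*} [∀ x, Nonempty (D x)]
    {I : Type*} [Fintype I]
    (L : I → Set ((x : X) × Set (D x))) (hLfin : ∀ i, (L i).Finite)
    (M : (∀ x, D x) → Bool)
    (hM : ∀ e' : ∀ x, D x, M e' = true ↔ ∀ i : I, ∃ ℓ ∈ L i, e' ℓ.1 ∈ ℓ.2)
    (hnontaut : ∀ i : I, ∃ e' : ∀ x, D x, ∀ ℓ ∈ L i, e' ℓ.1 ∉ ℓ.2)
    (e : ∀ x, D x) (hMe : M e = true)
    (B : I → Set X) (hB : ∀ i, B i = {x : X | ∃ ℓ ∈ L i, e ℓ.1 ∈ ℓ.2 ∧ ℓ.1 = x})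
    (S : Set X) :
    IsSufficientReason M e S ↔
      (∀ i : I, (S ∩ B i).Nonempty) ∧
        ∀ S' ⊂ S, ¬ ∀ i : I, (S' ∩ B i).Nonempty := by
  classical
  have key : ∀ T : Set X, IsReason M e T ↔ ∀ i : I, (T ∩ B i).Nonempty := by
    intro T
    constructor
    · intro hT
      by_contra h
      push_neg at h
      obtain ⟨i, hi⟩ := h
      obtain ⟨f, hf⟩ := hnontaut i
      set e' : ∀ x, D x := fun x => if x ∈ T then e x else f x with he'
      have hag : ∀ x ∈ T, e' x = e x := by intro x hx; simp [he', hx]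
      have hMe' : M e' = M e := hT e' hag
      rw [hMe, hM] at hMe'
      obtain ⟨ℓ, hℓL, hℓsat⟩ := hMe' i
      by_cases hmem : ℓ.1 ∈ T
      · have : ℓ.1 ∈ T ∩ B i := by
          refine ⟨hmem, ?_⟩
          rw [hB]
          exact ⟨ℓ, hℓL, by simpa [he', hmem] using hℓsat, rfl⟩
        simp [hi] at this
      · have : e' ℓ.1 = f ℓ.1 := by simp [he', hmem]
        rw [this] at hℓsat
        exact hf ℓ hℓL hℓsat
    · intro h
      intro e' hag
      rw [hMe, hM]
      intro i
      obtain ⟨x, hxT, hxB⟩ := h i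
      rw [hB] at hxB
      obtain ⟨ℓ, hℓL, hsat, hfeat⟩ := hxB
      refine ⟨ℓ, hℓL, ?_⟩
      subst hfeat
      rw [hag _ hxT]
      exact hsat
  unfold IsSufficientReason
  constructor
  · rintro ⟨h1, h2⟩
    exact ⟨(key S).mp h1, fun S' hS' hh => h2 S' hS' ((key S').mpr hh)⟩
  · rintro ⟨h1, h2⟩
    exact ⟨(key S).mpr h1, fun S' hS' hh => h2 S' hS' ((key S').mp hh)⟩
end

section
/- Let H = (V, E) be a hypergraph with V finite and let W ⊆ V. Then there exists a minimal hitting set S of H with W ⊆ S if and only if there exists a choice of hyperedges (B_w)_{w ∈ W} with w ∈ B_w ∈ E for each w ∈ W, such that no hyperedge B ∈ E satisfies B ⊆ ⋃_{w ∈ W} (B_w \ {w}). -/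
/-- `S` is a hitting set of the hypergraph with hyperedge family `E`. -/
def IsHittingSet {V : Type*} (E : Set (Set V)) (S : Set V) : Prop :=
  ∀ B ∈ E, (S ∩ B).Nonempty

/-- `S` is a minimal hitting set: a hitting set no proper subset of which is
a hitting set. -/
def IsMinimalHittingSet {V : Type*} (E : Set (Set V)) (S : Set V) : Prop :=
  IsHittingSet E S ∧ ∀ S' ⊂ S, ¬ IsHittingSet E S'

/-- There is a minimal hitting set of `(V, E)` containing `W` iff one can choose,
for each `w ∈ W`, a hyperedge `B w ∈ E` with `w ∈ B w`, in such a way that no hyperedge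
of `E` is contained in `⋃_{w ∈ W} (B w \ {w})`. -/
theorem exists_minimal_hittingSet_superset_iff
    {V : Type*} [Finite V] (E : Set (Set V)) (W : Set V) :
    (∃ S : Set V, W ⊆ S ∧ IsMinimalHittingSet E S) ↔
      ∃ B : W → Set V, (∀ w : W, B w ∈ E ∧ (w : V) ∈ B w) ∧
        ∀ A ∈ E, ¬ A ⊆ ⋃ w : W, (B w \ {(w : V)}) := by
  constructor
  · rintro ⟨S, hWS, hSh, hSmin⟩
    -- for each w ∈ S there is a private edge
    have priv : ∀ w : W, ∃ B ∈ E, S ∩ B = {(w : V)} := by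
      rintro ⟨w, hw⟩
      have hsub : S \ {w} ⊂ S := by
        refine Set.ssubset_iff_of_subset Set.diff_subset |>.mpr ⟨w, hWS hw, by simp⟩
      have := hSmin _ hsub
      simp only [IsHittingSet, not_forall] at this
      obtain ⟨B, hB, hBn⟩ := this
      refine ⟨B, hB, ?_⟩
      rw [Set.not_nonempty_iff_eq_empty] at hBn
      apply Set.eq_singleton_iff_unique_mem.mpr
      obtain ⟨x, hxS, hxB⟩ := hSh B hB
      have hx : ∀ y ∈ S ∩ B, y = w := by
        intro y ⟨hyS, hyB⟩
        by_contra hne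
        exact Set.eq_empty_iff_forall_notMem.mp hBn y ⟨⟨hyS, hne⟩, hyB⟩
      have hxw := hx x ⟨hxS, hxB⟩
      exact ⟨⟨hxw ▸ hxS, hxw ▸ hxB⟩, hx⟩
    choose B hBE hBpriv using priv
    refine ⟨B, fun w => ⟨hBE w, by
      have := hBpriv w; exact (Set.eq_singleton_iff_unique_mem.mp this).1.2⟩, ?_⟩
    intro A hA hAsub
    obtain ⟨x, hxS, hxA⟩ := hSh A hA
    obtain ⟨w, hw⟩ := Set.mem_iUnion.mp (hAsub hxA)
    have : x ∈ S ∩ B w := ⟨hxS, hw.1⟩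
    rw [hBpriv w] at this
    exact hw.2 this
  · rintro ⟨B, hB, hno⟩
    set T : Set V := ⋃ w : W, (B w \ {(w : V)}) with hT
    -- W ∩ T = ∅
    have hWT : ∀ w ∈ W, w ∉ T := by
      intro w hw hwT
      apply hno (B ⟨w, hw⟩) (hB ⟨w, hw⟩).1
      intro x hx
      by_cases hxw : x = w
      · exact hxw ▸ hwT
      · exact Set.mem_iUnion.mpr ⟨⟨w, hw⟩, hx, hxw⟩
    -- Tᶜ is a hitting set containing W
    have hTc : IsHittingSet E Tᶜ := by
      intro A hA
      rcases Set.not_subset.mp (fun h => hno A hA h) with ⟨x, hxA, hxT⟩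
      exact ⟨x, hxT, hxA⟩
    have hWTc : W ⊆ Tᶜ := fun w hw => hWT w hw
    -- get a minimal element of {S | W ⊆ S ∧ hitting} below Tᶜ
    obtain ⟨S, hSle, hSmin⟩ := exists_minimal_le_of_wellFoundedLT
      (P := fun S : Set V => W ⊆ S ∧ IsHittingSet E S) (a := Tᶜ) ⟨hWTc, hTc⟩
    obtain ⟨⟨hWS, hSh⟩, hmin⟩ := hSmin
    refine ⟨S, hWS, hSh, ?_⟩
    intro S' hS' hS'h
    by_cases hWS' : W ⊆ S'
    · exact hS'.not_subset (hmin ⟨hWS', hS'h⟩ hS'.subset)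
    · obtain ⟨w, hw, hwS'⟩ := Set.not_subset.mp hWS'
      obtain ⟨x, hxS', hxB⟩ := hS'h (B ⟨w, hw⟩) (hB ⟨w, hw⟩).1
      have hxw : x ≠ w := fun h => hwS' (h ▸ hxS')
      have hxT : x ∈ T := Set.mem_iUnion.mpr ⟨⟨w, hw⟩, hxB, hxw⟩
      exact (hS'.subset.trans hSle) hxS' hxT
end

section
/- Let H = (V, E) be a hypergraph with V finite, let v ∈ V, and let S₁, …, S_{k−1} be pairwise distinct minimal hitting sets of H. Then there exists a minimal hitting set S of H with v ∈ S and S ≠ S_i for every 1 ≤ i ≤ k−1 if and only if there exist a hyperedge B ∈ E with v ∈ B and nodes s₁, …, s_{k−1} with s_i ∈ S_i for each i, such that V \ ((B \ {v}) ∪ {s₁, …, s_{k−1}}) is a hitting set of H. -/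
lemma exists_minimal_hittingSet_subset {V : Type*} [Finite V] (E : Set (Set V)) (U : Set V)
    (hU : IsHittingSet E U) : ∃ T ⊆ U, IsMinimalHittingSet E T := by
  obtain ⟨T, hT, hTmin⟩ := (wellFounded_lt (α := Set V)).has_min
    {T | IsHittingSet E T ∧ T ⊆ U} ⟨U, hU, subset_rfl⟩
  exact ⟨T, hT.2, hT.1, fun S' hS' hS'hit => hTmin S' ⟨hS'hit, hS'.subset.trans hT.2⟩ hS'⟩

/-- Given `n` pairwise distinct minimal hitting sets `S 0, …, S (n-1)` and a node `v`,
there is a further minimal hitting set containing `v` and distinct from all of them iff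
there are a hyperedge `B ∈ E` with `v ∈ B` and nodes `s i ∈ S i` such that
`V \ ((B \ {v}) ∪ {s 0, …, s (n-1)})` is a hitting set. -/
theorem exists_new_minimal_hittingSet_iff
    {V : Type*} [Finite V] (E : Set (Set V)) (v : V)
    {n : ℕ} (S : Fin n → Set V)
    (hmin : ∀ i, IsMinimalHittingSet E (S i)) (hdist : Function.Injective S) :
    (∃ T : Set V, IsMinimalHittingSet E T ∧ v ∈ T ∧ ∀ i, T ≠ S i) ↔
      ∃ B ∈ E, v ∈ B ∧ ∃ s : Fin n → V, (∀ i, s i ∈ S i) ∧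
        IsHittingSet E (Set.univ \ ((B \ {v}) ∪ Set.range s)) := by
  constructor
  · rintro ⟨T, ⟨hThit, hTmin⟩, hvT, hTne⟩
    have hnot : ¬ IsHittingSet E (T \ {v}) :=
      hTmin _ (Set.sdiff_singleton_ssubset.mpr hvT)
    rw [IsHittingSet] at hnot
    push_neg at hnot
    obtain ⟨B, hBE, hB⟩ := hnot
    obtain ⟨x, hxT, hxB⟩ := hThit B hBE
    have hxv : x = v := by
      by_contra hne
      exact Set.eq_empty_iff_forall_notMem.mp hB x ⟨⟨hxT, hne⟩, hxB⟩
    have hs : ∀ i, ∃ y ∈ S i, y ∉ T := by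
      intro i
      by_contra h
      push_neg at h
      have hsub : S i ⊂ T := ⟨fun y hy => h y hy, fun hTS => hTne i
        (le_antisymm hTS (fun y hy => h y hy))⟩
      exact hTmin _ hsub (hmin i).1
    choose s hs1 hs2 using hs
    refine ⟨B, hBE, hxv ▸ hxB, s, hs1, ?_⟩
    have hTsub : T ⊆ Set.univ \ ((B \ {v}) ∪ Set.range s) := by
      intro y hy
      refine ⟨trivial, ?_⟩
      rintro (⟨hyB, hyv⟩ | ⟨i, rfl⟩)
      · exact Set.eq_empty_iff_forall_notMem.mp hB y ⟨⟨hy, hyv⟩, hyB⟩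
      · exact hs2 i hy
    intro C hCE
    obtain ⟨y, hyT, hyC⟩ := hThit C hCE
    exact ⟨y, hTsub hyT, hyC⟩
  · rintro ⟨B, hBE, hvB, s, hsS, hUhit⟩
    set U := Set.univ \ ((B \ {v}) ∪ Set.range s) with hUdef
    obtain ⟨T, hTU, hTmin⟩ := exists_minimal_hittingSet_subset E U hUhit
    have hmem : ∀ y ∈ U, y ∈ B → y = v := by
      rintro y ⟨-, hy⟩ hyB
      by_contra hne
      exact hy (Or.inl ⟨hyB, hne⟩)
    obtain ⟨y, hyT, hyB⟩ := hTmin.1 B hBE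
    have hyv : y = v := hmem y (hTU hyT) hyB
    subst hyv
    refine ⟨T, hTmin, hyT, fun i hTS => ?_⟩
    have : s i ∈ T := hTS ▸ hsS i
    exact (hTU this).2 (Or.inr ⟨i, rfl⟩)
end

section
/- Let H = (V_H, E_H) be a hypergraph with V_H finite and E_H a finite family of subsets, and let F be a set of unordered pairs of distinct nodes of V_H (the forbidden pairs). Define the finite simple graph G on vertex set V_H ⊔ E_H (disjoint union) with an edge between the copies of v and w for every {v, w} ∈ F, and an edge between the copy of v and the copy of B whenever v ∈ B ∈ E_H. Then there exists a hitting set S of H containing no forbidden pair of F (i.e., for every {v, w} ∈ F not both v ∈ S and w ∈ S) if and only if there exists a minimal vertex cover C of G that contains the copy of every hyperedge B ∈ E_H. -/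
/-- `C` is a vertex cover of the graph `G`: it contains an endpoint of every edge. -/
def IsVertexCover {α : Type*} (G : SimpleGraph α) (C : Set α) : Prop :=
  ∀ a b, G.Adj a b → a ∈ C ∨ b ∈ C

/-- `C` is a minimal vertex cover: a vertex cover no proper subset of which is
a vertex cover. -/
def IsMinimalVertexCover {α : Type*} (G : SimpleGraph α) (C : Set α) : Prop :=
  IsVertexCover G C ∧ ∀ C' ⊂ C, ¬ IsVertexCover G C'

/-- The graph associated to a hypergraph `(V, E)` with forbidden pairs `F`: its vertices
are the nodes of `V` together with one vertex per hyperedge; there is an edge between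
`v` and `w` for every forbidden pair `{v, w} ∈ F`, and an edge between `v` and (the
vertex of) `B` whenever `v ∈ B ∈ E`. -/
def forbiddenPairsGraph {V : Type*} (E : Finset (Finset V)) (F : Set (Sym2 V)) :
    SimpleGraph (V ⊕ {B : Finset V // B ∈ E}) :=
  SimpleGraph.fromRel (fun a b =>
    match a, b with
    | Sum.inl v, Sum.inl w => s(v, w) ∈ F
    | Sum.inl v, Sum.inr B => v ∈ B.1
    | _, _ => False)

lemma isMinimalVertexCover_iff_private {α : Type*} (G : SimpleGraph α) (C : Set α) :
    IsMinimalVertexCover G C ↔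
      IsVertexCover G C ∧ ∀ c ∈ C, ∃ b, b ∉ C ∧ G.Adj c b := by
  constructor
  · rintro ⟨hcov, hmin⟩
    refine ⟨hcov, fun c hc => ?_⟩
    have h := hmin (C \ {c}) (Set.sdiff_singleton_ssubset.mpr hc)
    simp only [IsVertexCover] at h
    push_neg at h
    obtain ⟨a, b, hab, ha, hb⟩ := h
    rcases hcov a b hab with haC | hbC
    · have hac : a = c := by
        by_contra hne
        exact ha ⟨haC, hne⟩
      refine ⟨b, fun hbC => ?_, hac ▸ hab⟩
      have : b = c := by
        by_contra hne
        exact hb ⟨hbC, hne⟩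
      exact G.ne_of_adj hab (hac.trans this.symm)
    · have hbc : b = c := by
        by_contra hne
        exact hb ⟨hbC, hne⟩
      refine ⟨a, fun haC => ?_, hbc ▸ hab.symm⟩
      have : a = c := by
        by_contra hne
        exact ha ⟨haC, hne⟩
      exact G.ne_of_adj hab (this.trans hbc.symm)
  · rintro ⟨hcov, hpriv⟩
    refine ⟨hcov, fun C' hC' hcov' => ?_⟩
    obtain ⟨c, hcC, hcC'⟩ := Set.exists_of_ssubset hC'
    obtain ⟨b, hbC, hadj⟩ := hpriv c hcC
    rcases hcov' c b hadj with h | h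
    · exact hcC' h
    · exact hbC (hC'.subset h)

/-- `(V, E)` has a hitting set containing no forbidden pair of `F` iff the associated
graph has a minimal vertex cover containing the vertex of every hyperedge. -/
theorem hittingSet_avoiding_forbidden_pairs_iff_minimal_vertexCover
    {V : Type*} [Fintype V] [DecidableEq V]
    (E : Finset (Finset V)) (F : Set (Sym2 V)) (hF : ∀ p ∈ F, ¬ p.IsDiag) :
    (∃ S : Set V, (∀ B ∈ E, (S ∩ ↑B).Nonempty) ∧
        ∀ v w : V, s(v, w) ∈ F → ¬ (v ∈ S ∧ w ∈ S)) ↔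
      ∃ C : Set (V ⊕ {B : Finset V // B ∈ E}),
        IsMinimalVertexCover (forbiddenPairsGraph E F) C ∧
          ∀ B : {B : Finset V // B ∈ E}, Sum.inr B ∈ C := by
  constructor
  · rintro ⟨S, hSh, hSF⟩
    -- extend S to a maximal F-independent set T
    set I : Set (Set V) := {T | ∀ v ∈ T, ∀ w ∈ T, s(v, w) ∉ F} with hI
    have hSI : S ∈ I := fun v hv w hw hvw => hSF v w hvw ⟨hv, hw⟩
    obtain ⟨T, hST, hTI, hTmax⟩ := zorn_subset_nonempty I
      (fun c hcI hchain _ => ⟨⋃₀ c, fun v hv w hw hvw => by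
        obtain ⟨t1, ht1c, hv1⟩ := hv
        obtain ⟨t2, ht2c, hw2⟩ := hw
        rcases hchain.total ht1c ht2c with h | h
        · exact hcI ht2c v (h hv1) w hw2 hvw
        · exact hcI ht1c v hv1 w (h hw2) hvw,
        fun s hs => Set.subset_sUnion_of_mem hs⟩) S hSI
    -- key maximality consequence
    have hmax : ∀ v ∉ T, ∃ w ∈ T, s(v, w) ∈ F := by
      intro v hv
      by_contra h
      push_neg at h
      have : insert v T ∈ I := by
        intro a ha b hb hab
        rcases ha with rfl | ha
        · rcases hb with rfl | hb
          · exact hF _ hab (by simp)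
          · exact h b hb hab
        · rcases hb with rfl | hb
          · exact h a ha (Sym2.eq_swap ▸ hab)
          · exact hTI a ha b hb hab
      exact hv (hTmax this (Set.subset_insert v T) (Set.mem_insert v T))
    refine ⟨(Sum.inl '' Tᶜ) ∪ Set.range Sum.inr, ?_, fun B => Or.inr ⟨B, rfl⟩⟩
    rw [isMinimalVertexCover_iff_private]
    constructor
    · rintro (v | B) (w | B') hadj
      · rw [forbiddenPairsGraph, SimpleGraph.fromRel_adj] at hadj
        obtain ⟨_, h | h⟩ := hadj
        · by_cases hv : v ∈ T
          · by_cases hw : w ∈ T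
            · exact absurd h (hTI v hv w hw)
            · exact Or.inr (Or.inl ⟨w, hw, rfl⟩)
          · exact Or.inl (Or.inl ⟨v, hv, rfl⟩)
        · by_cases hv : v ∈ T
          · by_cases hw : w ∈ T
            · exact absurd h (hTI w hw v hv)
            · exact Or.inr (Or.inl ⟨w, hw, rfl⟩)
          · exact Or.inl (Or.inl ⟨v, hv, rfl⟩)
      · exact Or.inr (Or.inr ⟨B', rfl⟩)
      · exact Or.inl (Or.inr ⟨B, rfl⟩)
      · rw [forbiddenPairsGraph, SimpleGraph.fromRel_adj] at hadj
        exact absurd hadj.2 (by simp)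
    · rintro (v | B) hc
      · -- c = Sum.inl v with v ∉ T
        have hv : v ∉ T := by
          rcases hc with ⟨u, hu, he⟩ | ⟨B, hB⟩
          · exact (Sum.inl.injEq .. ▸ he : u = v) ▸ hu
          · exact absurd hB (by simp)
        obtain ⟨w, hwT, hvw⟩ := hmax v hv
        refine ⟨Sum.inl w, ?_, ?_⟩
        · rintro (⟨u, hu, he⟩ | ⟨B, hB⟩)
          · exact hu ((Sum.inl.injEq .. ▸ he : u = w) ▸ hwT)
          · exact absurd hB (by simp)
        · rw [forbiddenPairsGraph, SimpleGraph.fromRel_adj]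
          have hne : v ≠ w := fun h => hF _ hvw (h ▸ by simp)
          exact ⟨by simpa using hne, Or.inl hvw⟩
      · -- c = Sum.inr B
        obtain ⟨u, huS, huB⟩ := hSh B.1 B.2
        have huT : u ∈ T := hST huS
        refine ⟨Sum.inl u, ?_, ?_⟩
        · rintro (⟨x, hx, he⟩ | ⟨B', hB'⟩)
          · exact hx ((Sum.inl.injEq .. ▸ he : x = u) ▸ huT)
          · exact absurd hB' (by simp)
        · rw [forbiddenPairsGraph, SimpleGraph.fromRel_adj]
          exact ⟨by simp, Or.inr huB⟩
  · rintro ⟨C, hC, hCE⟩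
    rw [isMinimalVertexCover_iff_private] at hC
    obtain ⟨hcov, hpriv⟩ := hC
    refine ⟨{v | Sum.inl v ∉ C}, ?_, ?_⟩
    · intro B hB
      obtain ⟨b, hbC, hadj⟩ := hpriv (Sum.inr ⟨B, hB⟩) (hCE ⟨B, hB⟩)
      rw [forbiddenPairsGraph, SimpleGraph.fromRel_adj] at hadj
      rcases b with v | B'
      · rcases hadj.2 with h | h
        · exact absurd h (by simp)
        · exact ⟨v, hbC, h⟩
      · rcases hadj.2 with h | h <;> simp at h
    · rintro v w hvw ⟨hv, hw⟩
      have hne : v ≠ w := fun h => hF _ hvw (h ▸ by simp)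
      have hadj : (forbiddenPairsGraph E F).Adj (Sum.inl v) (Sum.inl w) := by
        rw [forbiddenPairsGraph, SimpleGraph.fromRel_adj]
        exact ⟨by simpa using hne, Or.inl hvw⟩
      rcases hcov _ _ hadj with h | h
      · exact hv h
      · exact hw h
end
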